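/- Let μ ∈ (0,1), κ ∈ (0, 1−μ), λ ∈ (0,1], ε ∈ (0,1], and let K : [0,1]×[0,1] → ℝ be continuous and κ-Hölder in its first variable. Then there exists a constant C > 0 such that for every continuous v : [0,1] → ℝ and all θ₁, θ₂ ∈ [0,1] with θ₁ ≠ θ₂, |(𝒦₂v)(θ₁^{1/λ}) − (𝒦₂v)(θ₂^{1/λ})| ≤ C |θ₁ − θ₂|^κ · max_{θ∈[0,1]} |v(θ)|. -/

import Mathlib

open MeasureTheory Set intervalIntegral

section MyAux

/-- Lipschitz bound for `t ↦ t^p`, `p ≥ 1`, on `[0,1]`. -/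
private lemma my_rpow_lipschitz {p : ℝ} (hp : 1 ≤ p) {x y : ℝ} (hx : x ∈ Icc (0:ℝ) 1)
    (hy : y ∈ Icc (0:ℝ) 1) : |x ^ p - y ^ p| ≤ p * |x - y| := by
  have h := Convex.norm_image_sub_le_of_norm_hasDerivWithin_le
    (f := fun t : ℝ => t ^ p) (f' := fun t : ℝ => p * t ^ (p - 1)) (s := Icc (0:ℝ) 1)
    (fun t _ => (Real.hasDerivAt_rpow_const (Or.inr hp)).hasDerivWithinAt)
    (C := p) (fun t ht => by
      rw [Real.norm_eq_abs, abs_of_nonneg (mul_nonneg (by linarith) (Real.rpow_nonneg ht.1 _))]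
      calc p * t ^ (p - 1) ≤ p * 1 := by
            exact mul_le_mul_of_nonneg_left (Real.rpow_le_one ht.1 ht.2 (by linarith)) (by linarith)
        _ = p := mul_one p)
    (convex_Icc 0 1) hy hx
  simpa [Real.norm_eq_abs] using h

private lemma my_rpow_le_rpow_add {x y p : ℝ} (hy : 0 ≤ y) (hxy : y ≤ x) (hp0 : 0 ≤ p)
    (hp1 : p ≤ 1) : x ^ p ≤ y ^ p + (x - y) ^ p := by
  have h := NNReal.rpow_add_le_add_rpow ((x - y).toNNReal) (y.toNNReal) hp0 hp1
  have h2 := NNReal.coe_le_coe.2 h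
  rw [NNReal.coe_add, NNReal.coe_rpow, NNReal.coe_rpow, NNReal.coe_rpow, NNReal.coe_add,
    Real.coe_toNNReal _ (sub_nonneg.2 hxy), Real.coe_toNNReal _ hy, sub_add_cancel] at h2
  linarith

private lemma my_kernel_integrable {μ : ℝ} (hμ : μ < 1) (c x y : ℝ) :
    IntervalIntegrable (fun τ => (c - τ) ^ (-μ)) volume x y := by
  have h : (-1 : ℝ) < -μ := by linarith
  have := (intervalIntegrable_rpow' (a := c - x) (b := c - y) h).comp_sub_left c
  simpa using this

private lemma my_kernel_integral {μ : ℝ} (hμ : μ < 1) (c x y : ℝ) :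
    ∫ τ in x..y, (c - τ) ^ (-μ) = ((c - x) ^ (1 - μ) - (c - y) ^ (1 - μ)) / (1 - μ) := by
  have h : (-1 : ℝ) < -μ := by linarith
  rw [intervalIntegral.integral_comp_sub_left (fun t => t ^ (-μ)) c,
    integral_rpow (Or.inl h)]
  ring_nf

variable {μ a b t₁ t₂ M S Lip κ : ℝ} {K : ℝ → ℝ → ℝ} {v : ℝ → ℝ}

private lemma my_B1 (hμ0 : 0 < μ) (hμ1 : μ < 1) (ha0 : 0 ≤ a) (hab : a ≤ b) (hb1 : b ≤ 1)
    (hM : 0 ≤ M) (hS0 : 0 ≤ S)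
    (hMb : ∀ t ∈ Icc (0:ℝ) 1, ∀ s ∈ Icc (0:ℝ) 1, |K t s| ≤ M)
    (hS : ∀ τ ∈ Icc (0:ℝ) 1, |v τ| ≤ S)
    (ht₂ : t₂ ∈ Icc (0:ℝ) 1) :
    |∫ τ in (0:ℝ)..a, ((b - τ) ^ (-μ) - (a - τ) ^ (-μ)) * K t₂ τ * v τ|
      ≤ (b - a) ^ (1 - μ) * M * S / (1 - μ) := by
  have hker := fun (c x y : ℝ) => my_kernel_integrable (μ := μ) hμ1 c x y
  have ha1 : a ≤ 1 := hab.trans hb1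
  have hg : IntervalIntegrable (fun τ => ((a - τ) ^ (-μ) - (b - τ) ^ (-μ)) * M * S)
      volume 0 a := (((hker a 0 a).sub (hker b 0 a)).mul_const M).mul_const S
  have hne : ∀ᵐ τ ∂(volume.restrict (Set.uIoc (0:ℝ) a)), τ ≠ a :=
    ae_restrict_of_ae (compl_mem_ae_iff.mpr (measure_singleton a))
  have hstep : ∀ᵐ τ ∂(volume.restrict (Set.uIoc (0:ℝ) a)),
      ‖((b - τ) ^ (-μ) - (a - τ) ^ (-μ)) * K t₂ τ * v τ‖
        ≤ ((a - τ) ^ (-μ) - (b - τ) ^ (-μ)) * M * S := by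
    filter_upwards [ae_restrict_mem measurableSet_uIoc, hne] with τ hτ hτa
    rw [uIoc_of_le ha0] at hτ
    have hτa' : τ < a := lt_of_le_of_ne hτ.2 hτa
    have h1 : |(b - τ) ^ (-μ) - (a - τ) ^ (-μ)| = (a - τ) ^ (-μ) - (b - τ) ^ (-μ) := by
      rw [abs_sub_comm, abs_of_nonneg]
      exact sub_nonneg.2 (Real.rpow_le_rpow_of_nonpos (by linarith) (by linarith) (by linarith))
    have hd0 : (0:ℝ) ≤ (a - τ) ^ (-μ) - (b - τ) ^ (-μ) := h1 ▸ abs_nonneg _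
    rw [Real.norm_eq_abs, abs_mul, abs_mul, h1]
    gcongr
    · exact hMb t₂ ht₂ τ ⟨hτ.1.le, hτ.2.trans ha1⟩
    · exact hS τ ⟨hτ.1.le, hτ.2.trans ha1⟩
  refine (intervalIntegral.norm_integral_le_abs_of_norm_le hstep hg).trans ?_
  rw [intervalIntegral.integral_mul_const, intervalIntegral.integral_mul_const,
    intervalIntegral.integral_sub (hker a 0 a) (hker b 0 a),
    my_kernel_integral hμ1 a 0 a, my_kernel_integral hμ1 b 0 a]
  have hμ1' : (0:ℝ) < 1 - μ := by linarith
  rw [sub_zero, sub_zero, sub_self, Real.zero_rpow (ne_of_gt hμ1')]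
  have hsub : b ^ (1 - μ) ≤ a ^ (1 - μ) + (b - a) ^ (1 - μ) :=
    my_rpow_le_rpow_add ha0 hab (by linarith) (by linarith)
  have hmono : a ^ (1 - μ) ≤ b ^ (1 - μ) := Real.rpow_le_rpow ha0 hab (by linarith)
  have hnum0 : (0:ℝ) ≤ a ^ (1 - μ) - 0 - (b ^ (1 - μ) - (b - a) ^ (1 - μ)) := by linarith
  rw [← sub_div]
  rw [abs_of_nonneg (mul_nonneg (mul_nonneg (div_nonneg hnum0 hμ1'.le) hM) hS0)]
  calc (a ^ (1 - μ) - 0 - (b ^ (1 - μ) - (b - a) ^ (1 - μ))) / (1 - μ) * M * S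
      ≤ (b - a) ^ (1 - μ) / (1 - μ) * M * S := by
        gcongr
        linarith
    _ = (b - a) ^ (1 - μ) * M * S / (1 - μ) := by ring

private lemma my_B2 (hμ0 : 0 < μ) (hμ1 : μ < 1) (ha0 : 0 ≤ a) (ha1 : a ≤ 1)
    (hLip : 0 ≤ Lip) (hS0 : 0 ≤ S) (h12 : t₁ ≤ t₂)
    (ht₁ : t₁ ∈ Icc (0:ℝ) 1) (ht₂ : t₂ ∈ Icc (0:ℝ) 1)
    (hKH : ∀ θ₁ ∈ Icc (0:ℝ) 1, ∀ θ₂ ∈ Icc (0:ℝ) 1, ∀ s ∈ Icc (0:ℝ) 1,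
      |K θ₁ s - K θ₂ s| ≤ Lip * |θ₁ - θ₂| ^ κ)
    (hS : ∀ τ ∈ Icc (0:ℝ) 1, |v τ| ≤ S) :
    |∫ τ in (0:ℝ)..a, (a - τ) ^ (-μ) * (K t₂ τ - K t₁ τ) * v τ|
      ≤ Lip * (t₂ - t₁) ^ κ * S / (1 - μ) := by
  have hker := fun (c x y : ℝ) => my_kernel_integrable (μ := μ) hμ1 c x y
  have hμ1' : (0:ℝ) < 1 - μ := by linarith
  set L := Lip * (t₂ - t₁) ^ κ with hL_def
  have hL0 : 0 ≤ L := mul_nonneg hLip (Real.rpow_nonneg (by linarith) _)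
  have hg : IntervalIntegrable (fun τ => (a - τ) ^ (-μ) * L * S) volume 0 a :=
    ((hker a 0 a).mul_const L).mul_const S
  have hstep : ∀ᵐ τ ∂(volume.restrict (Set.uIoc (0:ℝ) a)),
      ‖(a - τ) ^ (-μ) * (K t₂ τ - K t₁ τ) * v τ‖ ≤ (a - τ) ^ (-μ) * L * S := by
    filter_upwards [ae_restrict_mem measurableSet_uIoc] with τ hτ
    rw [uIoc_of_le ha0] at hτ
    have hτI : τ ∈ Icc (0:ℝ) 1 := ⟨hτ.1.le, hτ.2.trans ha1⟩
    have hx0 : (0:ℝ) ≤ (a - τ) ^ (-μ) := Real.rpow_nonneg (by linarith [hτ.2]) _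
    have hK : |K t₂ τ - K t₁ τ| ≤ L := by
      rw [hL_def, ← abs_of_nonneg (sub_nonneg.2 h12)]
      exact hKH t₂ ht₂ t₁ ht₁ τ hτI
    rw [Real.norm_eq_abs, abs_mul, abs_mul, abs_of_nonneg hx0]
    exact mul_le_mul (mul_le_mul le_rfl hK (abs_nonneg _) hx0) (hS τ hτI) (abs_nonneg _)
      (mul_nonneg hx0 hL0)
  refine (intervalIntegral.norm_integral_le_abs_of_norm_le hstep hg).trans ?_
  rw [intervalIntegral.integral_mul_const, intervalIntegral.integral_mul_const,
    my_kernel_integral hμ1 a 0 a, sub_zero, sub_self, Real.zero_rpow (ne_of_gt hμ1'), sub_zero]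
  have hA0 : (0:ℝ) ≤ a ^ (1 - μ) := Real.rpow_nonneg ha0 _
  rw [abs_of_nonneg (mul_nonneg (mul_nonneg (div_nonneg hA0 hμ1'.le) hL0) hS0)]
  calc a ^ (1 - μ) / (1 - μ) * L * S ≤ 1 / (1 - μ) * L * S := by
        gcongr
        exact Real.rpow_le_one ha0 ha1 hμ1'.le
    _ = L * S / (1 - μ) := by ring

private lemma my_B3 (hμ0 : 0 < μ) (hμ1 : μ < 1) (ha0 : 0 ≤ a) (hab : a ≤ b) (hb1 : b ≤ 1)
    (hM : 0 ≤ M) (hS0 : 0 ≤ S)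
    (hMb : ∀ t ∈ Icc (0:ℝ) 1, ∀ s ∈ Icc (0:ℝ) 1, |K t s| ≤ M)
    (hS : ∀ τ ∈ Icc (0:ℝ) 1, |v τ| ≤ S)
    (ht₂ : t₂ ∈ Icc (0:ℝ) 1) :
    |∫ τ in a..b, (b - τ) ^ (-μ) * K t₂ τ * v τ|
      ≤ (b - a) ^ (1 - μ) * M * S / (1 - μ) := by
  have hker := fun (c x y : ℝ) => my_kernel_integrable (μ := μ) hμ1 c x y
  have hμ1' : (0:ℝ) < 1 - μ := by linarith
  have hg : IntervalIntegrable (fun τ => (b - τ) ^ (-μ) * M * S) volume a b :=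
    ((hker b a b).mul_const M).mul_const S
  have hstep : ∀ᵐ τ ∂(volume.restrict (Set.uIoc a b)),
      ‖(b - τ) ^ (-μ) * K t₂ τ * v τ‖ ≤ (b - τ) ^ (-μ) * M * S := by
    filter_upwards [ae_restrict_mem measurableSet_uIoc] with τ hτ
    rw [uIoc_of_le hab] at hτ
    have hτI : τ ∈ Icc (0:ℝ) 1 := ⟨(ha0.trans hτ.1.le), hτ.2.trans hb1⟩
    have hx0 : (0:ℝ) ≤ (b - τ) ^ (-μ) := Real.rpow_nonneg (by linarith [hτ.2]) _
    rw [Real.norm_eq_abs, abs_mul, abs_mul, abs_of_nonneg hx0]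
    exact mul_le_mul (mul_le_mul le_rfl (hMb t₂ ht₂ τ hτI) (abs_nonneg _) hx0) (hS τ hτI)
      (abs_nonneg _) (mul_nonneg hx0 hM)
  refine (intervalIntegral.norm_integral_le_abs_of_norm_le hstep hg).trans ?_
  rw [intervalIntegral.integral_mul_const, intervalIntegral.integral_mul_const,
    my_kernel_integral hμ1 b a b, sub_self, Real.zero_rpow (ne_of_gt hμ1'), sub_zero]
  have hA0 : (0:ℝ) ≤ (b - a) ^ (1 - μ) := Real.rpow_nonneg (by linarith) _
  rw [abs_of_nonneg (mul_nonneg (mul_nonneg (div_nonneg hA0 hμ1'.le) hM) hS0)]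
  exact le_of_eq (by ring)

end MyAux

/-- The weakly singular delay Volterra integral operator
`(𝒦₂v)(t) = ∫₀^{εt} (εt-τ)^{-μ} K(t,τ) v(τ) dτ`. -/
noncomputable def K2op (μ ε : ℝ) (K : ℝ → ℝ → ℝ) (v : ℝ → ℝ) (t : ℝ) : ℝ :=
  ∫ τ in (0:ℝ)..(ε * t), (ε * t - τ) ^ (-μ) * K t τ * v τ

private lemma my_key (μ ε : ℝ) (hμ : μ ∈ Ioo (0:ℝ) 1) (hε : ε ∈ Ioc (0:ℝ) 1)
    (K : ℝ → ℝ → ℝ) (M : ℝ) (hM : 0 ≤ M)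
    (hMb : ∀ t ∈ Icc (0:ℝ) 1, ∀ s ∈ Icc (0:ℝ) 1, |K t s| ≤ M)
    (hKτ : ∀ t ∈ Icc (0:ℝ) 1, ContinuousOn (K t) (Icc (0:ℝ) 1))
    (Lip κ : ℝ) (hLip : 0 ≤ Lip) (hκ0 : 0 < κ)
    (hKH : ∀ θ₁ ∈ Icc (0:ℝ) 1, ∀ θ₂ ∈ Icc (0:ℝ) 1, ∀ s ∈ Icc (0:ℝ) 1,
      |K θ₁ s - K θ₂ s| ≤ Lip * |θ₁ - θ₂| ^ κ)
    (v : ℝ → ℝ) (hv : ContinuousOn v (Icc (0:ℝ) 1))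
    (S : ℝ) (hS0 : 0 ≤ S) (hS : ∀ τ ∈ Icc (0:ℝ) 1, |v τ| ≤ S)
    (t₁ t₂ : ℝ) (ht₁ : t₁ ∈ Icc (0:ℝ) 1) (ht₂ : t₂ ∈ Icc (0:ℝ) 1) (h12 : t₁ ≤ t₂) :
    |K2op μ ε K v t₂ - K2op μ ε K v t₁|
      ≤ (2 * M * (t₂ - t₁) ^ (1 - μ) + Lip * (t₂ - t₁) ^ κ) * S / (1 - μ) := by
  obtain ⟨hμ0, hμ1⟩ := hμ
  obtain ⟨hε0, hε1⟩ := hε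
  set a := ε * t₁ with ha_def
  set b := ε * t₂ with hb_def
  have ha0 : 0 ≤ a := mul_nonneg hε0.le ht₁.1
  have hab : a ≤ b := mul_le_mul_of_nonneg_left h12 hε0.le
  have hb1 : b ≤ 1 := le_trans (mul_le_one₀ hε1 ht₂.1 ht₂.2) le_rfl
  have ha1 : a ≤ 1 := le_trans hab hb1
  have hIa : Icc (0:ℝ) a ⊆ Icc 0 1 := Icc_subset_Icc le_rfl ha1
  have hIb : Icc (0:ℝ) b ⊆ Icc 0 1 := Icc_subset_Icc le_rfl hb1
  have hK1 : ContinuousOn (K t₁) (Icc (0:ℝ) 1) := hKτ t₁ ht₁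
  have hK2 : ContinuousOn (K t₂) (Icc (0:ℝ) 1) := hKτ t₂ ht₂
  have hker := fun (c x y : ℝ) => my_kernel_integrable (μ := μ) hμ1 c x y
  have hF2_0a : IntervalIntegrable (fun τ => (b - τ) ^ (-μ) * K t₂ τ * v τ) volume 0 a := by
    apply ((hker b 0 a).mul_continuousOn (hK2.mono ?_)).mul_continuousOn (hv.mono ?_) <;>
      · rw [uIcc_of_le ha0]; exact hIa
  have hF2_ab : IntervalIntegrable (fun τ => (b - τ) ^ (-μ) * K t₂ τ * v τ) volume a b := by
    apply ((hker b a b).mul_continuousOn (hK2.mono ?_)).mul_continuousOn (hv.mono ?_) <;>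
      · rw [uIcc_of_le hab]; exact (Icc_subset_Icc ha0 le_rfl).trans hIb
  have hF1_0a : IntervalIntegrable (fun τ => (a - τ) ^ (-μ) * K t₁ τ * v τ) volume 0 a := by
    apply ((hker a 0 a).mul_continuousOn (hK1.mono ?_)).mul_continuousOn (hv.mono ?_) <;>
      · rw [uIcc_of_le ha0]; exact hIa
  have hD1 : IntervalIntegrable
      (fun τ => ((b - τ) ^ (-μ) - (a - τ) ^ (-μ)) * K t₂ τ * v τ) volume 0 a := by
    apply (((hker b 0 a).sub (hker a 0 a)).mul_continuousOn (hK2.mono ?_)).mul_continuousOn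
      (hv.mono ?_) <;> · rw [uIcc_of_le ha0]; exact hIa
  have hD2 : IntervalIntegrable
      (fun τ => (a - τ) ^ (-μ) * (K t₂ τ - K t₁ τ) * v τ) volume 0 a := by
    apply ((hker a 0 a).mul_continuousOn ((hK2.sub hK1).mono ?_)).mul_continuousOn
      (hv.mono ?_) <;> · rw [uIcc_of_le ha0]; exact hIa
  have hsplit : K2op μ ε K v t₂ - K2op μ ε K v t₁
      = (∫ τ in (0:ℝ)..a, ((b - τ) ^ (-μ) - (a - τ) ^ (-μ)) * K t₂ τ * v τ)
      + (∫ τ in (0:ℝ)..a, (a - τ) ^ (-μ) * (K t₂ τ - K t₁ τ) * v τ)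
      + ∫ τ in a..b, (b - τ) ^ (-μ) * K t₂ τ * v τ := by
    have hadd := intervalIntegral.integral_add_adjacent_intervals hF2_0a hF2_ab
    have h1 : K2op μ ε K v t₂ = (∫ τ in (0:ℝ)..a, (b - τ) ^ (-μ) * K t₂ τ * v τ)
        + ∫ τ in a..b, (b - τ) ^ (-μ) * K t₂ τ * v τ := by
      rw [hadd]; rfl
    have h2 : K2op μ ε K v t₁ = ∫ τ in (0:ℝ)..a, (a - τ) ^ (-μ) * K t₁ τ * v τ := rfl
    rw [h1, h2, ← intervalIntegral.integral_add hD1 hD2]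
    have : (∫ τ in (0:ℝ)..a, (b - τ) ^ (-μ) * K t₂ τ * v τ)
        - ∫ τ in (0:ℝ)..a, (a - τ) ^ (-μ) * K t₁ τ * v τ
        = ∫ τ in (0:ℝ)..a, (((b - τ) ^ (-μ) - (a - τ) ^ (-μ)) * K t₂ τ * v τ
            + (a - τ) ^ (-μ) * (K t₂ τ - K t₁ τ) * v τ) := by
      rw [← intervalIntegral.integral_sub hF2_0a hF1_0a]
      apply intervalIntegral.integral_congr
      intro τ _
      ring
    linarith [this]
  have b1 := my_B1 hμ0 hμ1 ha0 hab hb1 hM hS0 hMb hS ht₂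
  have b2 := my_B2 (κ := κ) hμ0 hμ1 ha0 ha1 hLip hS0 h12 ht₁ ht₂ hKH hS
  have b3 := my_B3 hμ0 hμ1 ha0 hab hb1 hM hS0 hMb hS ht₂
  have hba : b - a = ε * (t₂ - t₁) := by rw [ha_def, hb_def]; ring
  have hεd : (b - a) ^ (1 - μ) ≤ (t₂ - t₁) ^ (1 - μ) := by
    rw [hba]
    exact Real.rpow_le_rpow (mul_nonneg hε0.le (by linarith)) (by nlinarith) (by linarith)
  have hμ1' : (0:ℝ) < 1 - μ := by linarith
  have hB1' : (b - a) ^ (1 - μ) * M * S / (1 - μ) ≤ (t₂ - t₁) ^ (1 - μ) * M * S / (1 - μ) := by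
    gcongr
  have habs : |K2op μ ε K v t₂ - K2op μ ε K v t₁|
      ≤ |∫ τ in (0:ℝ)..a, ((b - τ) ^ (-μ) - (a - τ) ^ (-μ)) * K t₂ τ * v τ|
      + |∫ τ in (0:ℝ)..a, (a - τ) ^ (-μ) * (K t₂ τ - K t₁ τ) * v τ|
      + |∫ τ in a..b, (b - τ) ^ (-μ) * K t₂ τ * v τ| := by
    rw [hsplit]
    exact (abs_add_le _ _).trans (by gcongr; exact abs_add_le _ _)
  have hring : (2 * M * (t₂ - t₁) ^ (1 - μ) + Lip * (t₂ - t₁) ^ κ) * S / (1 - μ)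
      = (t₂ - t₁) ^ (1 - μ) * M * S / (1 - μ) + Lip * (t₂ - t₁) ^ κ * S / (1 - μ)
        + (t₂ - t₁) ^ (1 - μ) * M * S / (1 - μ) := by ring
  rw [hring]
  linarith

/-- Hölder-type bound for the composition of `𝒦₂` with `θ ↦ θ^{1/λ}`:
for `μ ∈ (0,1)`, `κ ∈ (0,1-μ)`, `λ ∈ (0,1]`, `ε ∈ (0,1]` and `K` continuous and
`κ`-Hölder in its first variable, there is `C > 0` with
`|(𝒦₂v)(θ₁^{1/λ}) - (𝒦₂v)(θ₂^{1/λ})| ≤ C |θ₁-θ₂|^κ · max |v|`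
for all continuous `v` and `θ₁ ≠ θ₂` in `[0,1]`. -/
theorem K2_holder_increment_bound_fractional (μ κ lam ε : ℝ) (hμ : μ ∈ Ioo (0:ℝ) 1)
    (hκ : κ ∈ Ioo (0:ℝ) (1 - μ)) (hlam : lam ∈ Ioc (0:ℝ) 1) (hε : ε ∈ Ioc (0:ℝ) 1)
    (K : ℝ → ℝ → ℝ)
    (hKcont : ContinuousOn (fun p : ℝ × ℝ => K p.1 p.2) (Icc 0 1 ×ˢ Icc 0 1))
    (Lip : ℝ) (hLip : 0 ≤ Lip)
    (hKH : ∀ θ₁ ∈ Icc (0:ℝ) 1, ∀ θ₂ ∈ Icc (0:ℝ) 1, ∀ s ∈ Icc (0:ℝ) 1,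
      |K θ₁ s - K θ₂ s| ≤ Lip * |θ₁ - θ₂| ^ κ) :
    ∃ C > (0:ℝ), ∀ v : ℝ → ℝ, ContinuousOn v (Icc (0:ℝ) 1) →
      ∀ θ₁ ∈ Icc (0:ℝ) 1, ∀ θ₂ ∈ Icc (0:ℝ) 1, θ₁ ≠ θ₂ →
      |K2op μ ε K v (θ₁ ^ (1/lam)) - K2op μ ε K v (θ₂ ^ (1/lam))|
        ≤ C * |θ₁ - θ₂| ^ κ * sSup ((fun θ => |v θ|) '' Icc (0:ℝ) 1) := by
  obtain ⟨hμ0, hμ1⟩ := hμ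
  obtain ⟨hκ0, hκ1⟩ := hκ
  obtain ⟨hlam0, hlam1⟩ := hlam
  have hμ1' : (0:ℝ) < 1 - μ := by linarith
  -- bound for K
  obtain ⟨M₀, hM₀⟩ := (isCompact_Icc.prod isCompact_Icc).exists_bound_of_continuousOn hKcont
  set M := max M₀ 0 with hM_def
  have hM : 0 ≤ M := le_max_right _ _
  have hMb : ∀ t ∈ Icc (0:ℝ) 1, ∀ s ∈ Icc (0:ℝ) 1, |K t s| ≤ M := fun t ht s hs =>
    le_trans (hM₀ (t, s) (mk_mem_prod ht hs)) (le_max_left _ _)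
  have hKτ : ∀ t ∈ Icc (0:ℝ) 1, ContinuousOn (K t) (Icc (0:ℝ) 1) := by
    intro t ht
    have : ContinuousOn (fun s => (t, s)) (Icc (0:ℝ) 1) :=
      (continuous_const.prodMk continuous_id).continuousOn
    exact hKcont.comp this (fun s hs => mk_mem_prod ht hs)
  set p := 1 / lam with hp_def
  have hp1 : 1 ≤ p := (le_div_iff₀ hlam0).2 (by linarith)
  have hp0 : 0 < p := by linarith
  refine ⟨p * (2 * M + Lip) / (1 - μ) + 1, by positivity, ?_⟩
  intro v hv θ₁ hθ₁ θ₂ hθ₂ hne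
  set S := sSup ((fun θ => |v θ|) '' Icc (0:ℝ) 1) with hS_def
  have hbdd : BddAbove ((fun θ => |v θ|) '' Icc (0:ℝ) 1) :=
    (isCompact_Icc.image_of_continuousOn hv.abs).bddAbove
  have hS : ∀ τ ∈ Icc (0:ℝ) 1, |v τ| ≤ S := fun τ hτ => le_csSup hbdd (mem_image_of_mem _ hτ)
  have hS0 : 0 ≤ S := le_trans (abs_nonneg (v 0)) (hS 0 ⟨le_refl 0, zero_le_one⟩)
  -- the main claim for ordered arguments
  have main : ∀ θ₁ ∈ Icc (0:ℝ) 1, ∀ θ₂ ∈ Icc (0:ℝ) 1, θ₁ < θ₂ →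
      |K2op μ ε K v (θ₁ ^ p) - K2op μ ε K v (θ₂ ^ p)|
        ≤ (p * (2 * M + Lip) / (1 - μ) + 1) * |θ₁ - θ₂| ^ κ * S := by
    intro θ₁ hθ₁ θ₂ hθ₂ hlt
    set t₁ := θ₁ ^ p with ht₁_def
    set t₂ := θ₂ ^ p with ht₂_def
    have ht₁ : t₁ ∈ Icc (0:ℝ) 1 :=
      ⟨Real.rpow_nonneg hθ₁.1 _, Real.rpow_le_one hθ₁.1 hθ₁.2 hp0.le⟩
    have ht₂ : t₂ ∈ Icc (0:ℝ) 1 :=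
      ⟨Real.rpow_nonneg hθ₂.1 _, Real.rpow_le_one hθ₂.1 hθ₂.2 hp0.le⟩
    have h12 : t₁ ≤ t₂ := Real.rpow_le_rpow hθ₁.1 hlt.le hp0.le
    have hdθ0 : 0 < θ₂ - θ₁ := by linarith
    have hdθ1 : θ₂ - θ₁ ≤ 1 := by
      have := hθ₂.2; have := hθ₁.1; linarith
    -- |t₂ - t₁| ≤ p * (θ₂ - θ₁)
    have hlips : t₂ - t₁ ≤ p * (θ₂ - θ₁) := by
      have h := my_rpow_lipschitz hp1 hθ₂ hθ₁
      rw [abs_of_nonneg (sub_nonneg.2 h12), abs_of_nonneg (by linarith : (0:ℝ) ≤ θ₂ - θ₁)] at h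
      exact h
    have hdt0 : 0 ≤ t₂ - t₁ := sub_nonneg.2 h12
    have hpow1 : (t₂ - t₁) ^ (1 - μ) ≤ p * (θ₂ - θ₁) ^ κ := by
      calc (t₂ - t₁) ^ (1 - μ) ≤ (p * (θ₂ - θ₁)) ^ (1 - μ) :=
            Real.rpow_le_rpow hdt0 hlips hμ1'.le
        _ = p ^ (1 - μ) * (θ₂ - θ₁) ^ (1 - μ) := Real.mul_rpow hp0.le hdθ0.le
        _ ≤ p * (θ₂ - θ₁) ^ κ := by
            apply mul_le_mul
            · calc p ^ (1 - μ) ≤ p ^ (1:ℝ) :=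
                    Real.rpow_le_rpow_of_exponent_le hp1 (by linarith)
                _ = p := Real.rpow_one p
            · exact Real.rpow_le_rpow_of_exponent_ge' hdθ0.le hdθ1 hκ0.le (by linarith)
            · exact Real.rpow_nonneg hdθ0.le _
            · exact hp0.le
    have hpow2 : (t₂ - t₁) ^ κ ≤ p * (θ₂ - θ₁) ^ κ := by
      calc (t₂ - t₁) ^ κ ≤ (p * (θ₂ - θ₁)) ^ κ := Real.rpow_le_rpow hdt0 hlips hκ0.le
        _ = p ^ κ * (θ₂ - θ₁) ^ κ := Real.mul_rpow hp0.le hdθ0.le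
        _ ≤ p * (θ₂ - θ₁) ^ κ := by
            apply mul_le_mul_of_nonneg_right _ (Real.rpow_nonneg hdθ0.le _)
            calc p ^ κ ≤ p ^ (1:ℝ) :=
                  Real.rpow_le_rpow_of_exponent_le hp1 (by linarith)
              _ = p := Real.rpow_one p
    have hkey := my_key μ ε ⟨hμ0, hμ1⟩ hε K M hM hMb hKτ Lip κ hLip hκ0 hKH v hv S hS0 hS
      t₁ t₂ ht₁ ht₂ h12
    rw [abs_sub_comm] at hkey
    have habsθ : |θ₁ - θ₂| = θ₂ - θ₁ := by rw [abs_sub_comm, abs_of_nonneg hdθ0.le]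
    rw [habsθ]
    refine hkey.trans ?_
    have hchain : (2 * M * (t₂ - t₁) ^ (1 - μ) + Lip * (t₂ - t₁) ^ κ) * S / (1 - μ)
        ≤ (2 * M * (p * (θ₂ - θ₁) ^ κ) + Lip * (p * (θ₂ - θ₁) ^ κ)) * S / (1 - μ) := by
      gcongr
    refine hchain.trans ?_
    have : (2 * M * (p * (θ₂ - θ₁) ^ κ) + Lip * (p * (θ₂ - θ₁) ^ κ)) * S / (1 - μ)
        = (p * (2 * M + Lip) / (1 - μ)) * (θ₂ - θ₁) ^ κ * S := by ring
    rw [this]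
    have hθκ0 : 0 ≤ (θ₂ - θ₁) ^ κ := Real.rpow_nonneg hdθ0.le _
    nlinarith [mul_nonneg hθκ0 hS0]
  rcases hne.lt_or_gt with h | h
  · exact main θ₁ hθ₁ θ₂ hθ₂ h
  · have := main θ₂ hθ₂ θ₁ hθ₁ h
    rwa [abs_sub_comm, abs_sub_comm θ₂ θ₁] at this
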